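/- Let k + 2 = p'/p with p, p' coprime integers ≥ 2, let ℓ, r, s be integers with 1 ≤ s ≤ p'-1, 1 ≤ r ≤ p-2, and λ ∈ ℂ. Then h_{p,p'}^{r+1,s} + (1/4)((ℓ+1)²k + 4(ℓ+2)(λ - k/2)) − (h_{p,p'}^{r,s} + (1/4)(ℓ²k + 4(ℓ+1)λ)) is an integer if and only if λ − λ_{r,s}^+ is an integer, where λ_{r,s}^+ = ((s-1) − (k+2)(r-1))/2. -/
import Mathlib


theorem conformal_weight_congruence (p p' : ℤ) (hp : 2 ≤ p) (hp' : 2 ≤ p')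
    (hcop : IsCoprime p p') (l r s : ℤ) (hs1 : 1 ≤ s) (hs2 : s ≤ p' - 1)
    (hr1 : 1 ≤ r) (hr2 : r ≤ p - 2) (k : ℂ) (hk : k + 2 = (p' : ℂ) / (p : ℂ))
    (lam : ℂ) :
    (∃ n : ℤ,
      ((((s : ℂ) * p - (r + 1) * p') ^ 2 - ((p : ℂ) - p') ^ 2) / (4 * p * p')
          + (1 / 4) * (((l : ℂ) + 1) ^ 2 * k + 4 * ((l : ℂ) + 2) * (lam - k / 2)))
        - ((((s : ℂ) * p - r * p') ^ 2 - ((p : ℂ) - p') ^ 2) / (4 * p * p')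
          + (1 / 4) * ((l : ℂ) ^ 2 * k + 4 * ((l : ℂ) + 1) * lam)) = (n : ℂ))
    ↔ (∃ n : ℤ, lam - (((s : ℂ) - 1) - (k + 2) * ((r : ℂ) - 1)) / 2 = (n : ℂ)) := by
  have hpne : (p : ℂ) ≠ 0 := by
    exact_mod_cast (by omega : p ≠ 0)
  have hp'ne : (p' : ℂ) ≠ 0 := by
    exact_mod_cast (by omega : p' ≠ 0)
  have E : ((((s : ℂ) * p - (r + 1) * p') ^ 2 - ((p : ℂ) - p') ^ 2) / (4 * p * p')
          + (1 / 4) * (((l : ℂ) + 1) ^ 2 * k + 4 * ((l : ℂ) + 2) * (lam - k / 2)))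
        - ((((s : ℂ) * p - r * p') ^ 2 - ((p : ℂ) - p') ^ 2) / (4 * p * p')
          + (1 / 4) * ((l : ℂ) ^ 2 * k + 4 * ((l : ℂ) + 1) * lam))
      = (lam - (((s : ℂ) - 1) - (k + 2) * ((r : ℂ) - 1)) / 2) + 1 := by
    have hpp' : (k + 2) * p = (p' : ℂ) := (eq_div_iff hpne).mp hk
    have h4 : (4 * (p:ℂ) * p') ≠ 0 := by simp [hpne, hp'ne]
    rw [div_add' _ _ _ h4, div_add' _ _ _ h4, div_sub_div _ _ h4 h4,
      div_eq_iff (mul_ne_zero h4 h4), ← hpp']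
    ring
  constructor
  · rintro ⟨n, h⟩
    exact ⟨n - 1, by push_cast; linear_combination h - E⟩
  · rintro ⟨n, h⟩
    exact ⟨n + 1, by push_cast; linear_combination h + E⟩
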